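/- Let n, m be integers with m ≥ 2 and N := n − 2m ≥ 1, and set ℓ := (n−m)/2 ∈ ℝ. For a positive integer r and t ∈ ℝ let g_r(t) := √(2/(πr)) · exp(−(2t−r)²/(2r)). Set α := 4/(m−1), β := 2/N, and μ := (m−1)(2N+m) / (2(2N+m−1)). Then (as an equality of complex numbers, with the real left-hand side coerced into ℂ): Σ_{j ∈ ℤ} g_{m−1}(j)² · g_N(ℓ−j) = (2/π) · (1/√((m−1)(2N+m−1))) · exp(−1/(2N+m−1)) · Σ_{t ∈ ℤ} exp(−π²·t²/(α+β)) · exp(−2πi·t·μ). Moreover α + β = 2(2N+m−1)/((m−1)N), and 2N+m−1 = 2n−3m−1. -/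

import Mathlib

open Real

/-- Gaussian proxy for the probability mass function of `Binomial(r, 1/2)`:
`g_r(t) = √(2/(πr))·exp(-(2t-r)²/(2r))`. -/
noncomputable def gpmf (r : ℕ) (t : ℝ) : ℝ :=
  Real.sqrt (2 / (π * r)) * Real.exp (-(2 * t - r) ^ 2 / (2 * r))

/-- **Lattice sum of the triple Gaussian.**
For integers `n, m` with `m ≥ 2` and `N := n - 2m ≥ 1`, `ℓ := (n-m)/2 ∈ ℝ`,
`α := 4/(m-1)`, `β := 2/N`, `μ := (m-1)(2N+m)/(2(2N+m-1))`, one has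
`Σ_{j ∈ ℤ} g_{m-1}(j)²·g_N(ℓ-j)
  = (2/π)·(1/√((m-1)(2N+m-1)))·exp(-1/(2N+m-1))·Σ_{t ∈ ℤ} exp(-π²t²/(α+β))·exp(-2πi·t·μ)`,
together with `α + β = 2(2N+m-1)/((m-1)N)` and `2N+m-1 = 2n-3m-1`. -/
theorem triple_gaussian_lattice_sum
    (n m N : ℕ) (hm : 2 ≤ m) (hn : 2 * m < n) (hN : N = n - 2 * m)
    (ℓ α β μ : ℝ)
    (hℓ : ℓ = ((n : ℝ) - m) / 2)
    (hα : α = 4 / ((m : ℝ) - 1))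
    (hβ : β = 2 / (N : ℝ))
    (hμ : μ = ((m : ℝ) - 1) * (2 * (N : ℝ) + m) / (2 * (2 * (N : ℝ) + m - 1))) :
    (∑' j : ℤ, ((gpmf (m - 1) (j : ℝ) ^ 2 * gpmf N (ℓ - (j : ℝ)) : ℝ) : ℂ)
      = (2 / (π : ℂ)) *
          (1 / ((Real.sqrt (((m : ℝ) - 1) * (2 * (N : ℝ) + m - 1)) : ℝ) : ℂ)) *
          Complex.exp (-(1 : ℂ) / ((2 * (N : ℝ) + m - 1 : ℝ) : ℂ)) *
          ∑' t : ℤ, Complex.exp (-(π : ℂ) ^ 2 * (t : ℂ) ^ 2 / ((α + β : ℝ) : ℂ)) *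
            Complex.exp (-2 * (π : ℂ) * Complex.I * (t : ℂ) * (μ : ℂ))) ∧
    α + β = 2 * (2 * (N : ℝ) + m - 1) / (((m : ℝ) - 1) * N) ∧
    2 * (N : ℝ) + m - 1 = 2 * (n : ℝ) - 3 * m - 1 := by
  -- basic positivity and cast facts
  have hπ : (0:ℝ) < π := Real.pi_pos
  have hm1 : (0:ℝ) < (m:ℝ) - 1 := by
    have : (2:ℝ) ≤ m := by exact_mod_cast hm
    linarith
  have hNn : 1 ≤ N := by omega
  have hNR : (0:ℝ) < (N:ℝ) := by exact_mod_cast Nat.lt_of_lt_of_le Nat.zero_lt_one hNn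
  have hs : (0:ℝ) < 2 * (N:ℝ) + m - 1 := by
    have : (2:ℝ) ≤ m := by exact_mod_cast hm
    linarith
  have hmc : ((m - 1 : ℕ) : ℝ) = (m:ℝ) - 1 := by
    have : 1 ≤ m := by omega
    push_cast [this]; ring
  have hnc : (n:ℝ) = (N:ℝ) + 2 * m := by
    have : n = N + 2 * m := by omega
    exact_mod_cast this
  -- abbreviations
  set a : ℝ := α + β with ha_def
  have ha : (0:ℝ) < a := by
    rw [ha_def, hα, hβ]; positivity
  have haval : a = 2 * (2 * (N:ℝ) + m - 1) / (((m:ℝ) - 1) * N) := by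
    rw [ha_def, hα, hβ]; field_simp; ring
  set A : ℝ := a / π with hA_def
  have hA : (0:ℝ) < A := div_pos ha hπ
  have hπA : π * A = a := by rw [hA_def]; field_simp
  set b : ℝ := A * μ with hb_def
  set d : ℝ := -1 / (2 * (N:ℝ) + m - 1) with hd_def
  set C : ℝ := (2 / (π * ((m:ℝ) - 1))) * Real.sqrt (2 / (π * N)) with hC_def
  refine ⟨?_, by rw [haval], by rw [hnc]; ring⟩
  -- Step 1: termwise identity for the LHS, over ℝ
  have hterm : ∀ x : ℝ, gpmf (m - 1) x ^ 2 * gpmf N (ℓ - x)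
      = C * Real.exp (-a * (x - μ) ^ 2 + d) := by
    intro x
    have h1 : (0:ℝ) ≤ 2 / (π * ((m - 1 : ℕ):ℝ)) := by rw [hmc]; positivity
    have hexp : -(2 * x - ((m-1:ℕ):ℝ)) ^ 2 / (2 * ((m-1:ℕ):ℝ))
          + -(2 * x - ((m-1:ℕ):ℝ)) ^ 2 / (2 * ((m-1:ℕ):ℝ))
          + -(2 * (ℓ - x) - (N:ℝ)) ^ 2 / (2 * (N:ℝ))
        = -a * (x - μ) ^ 2 + d := by
      rw [hmc, haval, hμ, hd_def, hℓ, hnc]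
      field_simp
      ring
    have hgen : ∀ (c1 c2 E1 E2 : ℝ), 0 ≤ c1 →
        (Real.sqrt c1 * Real.exp E1) ^ 2 * (Real.sqrt c2 * Real.exp E2)
          = c1 * Real.sqrt c2 * Real.exp (E1 + E1 + E2) := by
      intro c1 c2 E1 E2 h
      rw [Real.exp_add, Real.exp_add, mul_pow, Real.sq_sqrt h, pow_two]
      ring
    rw [gpmf, gpmf, hgen _ _ _ _ h1, hexp, hC_def, hmc]
  -- Step 2: termwise, as complex numbers, matching the Poisson summation shape
  have hterm2 : ∀ j : ℤ, ((gpmf (m - 1) (j:ℝ) ^ 2 * gpmf N (ℓ - (j:ℝ)) : ℝ) : ℂ)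
      = ((C : ℂ) * Complex.exp ((d : ℂ) - a * μ ^ 2)) *
          Complex.exp (-(π:ℂ) * (A:ℂ) * (j:ℂ) ^ 2 + 2 * (π:ℂ) * (b:ℂ) * (j:ℂ)) := by
    intro j
    rw [hterm (j:ℝ)]
    push_cast [Complex.ofReal_exp]
    rw [mul_assoc, ← Complex.exp_add]
    congr 1
    have h1 : (π:ℂ) * (A:ℂ) = (a:ℂ) := by exact_mod_cast congrArg Complex.ofReal hπA
    have h2 : (π:ℂ) * (b:ℂ) = (a:ℂ) * (μ:ℂ) := by
      have : π * b = a * μ := by rw [hb_def, ← hπA]; ring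
      exact_mod_cast congrArg Complex.ofReal this
    rw [show -(π:ℂ) * (A:ℂ) * (j:ℂ)^2 + 2 * (π:ℂ) * (b:ℂ) * (j:ℂ)
        = -((π:ℂ) * (A:ℂ)) * (j:ℂ)^2 + 2 * ((π:ℂ) * (b:ℂ)) * (j:ℂ) from by ring,
      h1, h2]
    ring
  -- Step 3: termwise identity for the dual sum
  have hA0 : (A:ℂ) ≠ 0 := by exact_mod_cast ne_of_gt hA
  have hπ0 : (π:ℂ) ≠ 0 := by exact_mod_cast ne_of_gt hπ
  have ha0 : (a:ℂ) ≠ 0 := by exact_mod_cast ne_of_gt ha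
  have hterm3 : ∀ t : ℤ, Complex.exp (-(π:ℂ) / (A:ℂ) * ((t:ℂ) + Complex.I * (b:ℂ)) ^ 2)
      = Complex.exp ((a:ℂ) * (μ:ℂ) ^ 2) *
        (Complex.exp (-(π:ℂ)^2 * (t:ℂ)^2 / ((a:ℝ):ℂ)) *
         Complex.exp (-2 * (π:ℂ) * Complex.I * (t:ℂ) * (μ:ℂ))) := by
    intro t
    rw [← Complex.exp_add, ← Complex.exp_add]
    congr 1
    have h1 : (a:ℂ) = (π:ℂ) * (A:ℂ) := by exact_mod_cast (congrArg Complex.ofReal hπA).symm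
    have h2 : (b:ℂ) = (A:ℂ) * (μ:ℂ) := by
      exact_mod_cast congrArg Complex.ofReal hb_def
    rw [h2]
    field_simp [h1]
    ring_nf
    rw [Complex.I_sq]
    rw [h1]
    ring
  -- assemble
  calc (∑' j : ℤ, ((gpmf (m - 1) (j:ℝ) ^ 2 * gpmf N (ℓ - (j:ℝ)) : ℝ) : ℂ))
      = ∑' j : ℤ, ((C : ℂ) * Complex.exp ((d : ℂ) - a * μ ^ 2)) *
          Complex.exp (-(π:ℂ) * (A:ℂ) * (j:ℂ) ^ 2 + 2 * (π:ℂ) * (b:ℂ) * (j:ℂ)) :=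
        tsum_congr hterm2
    _ = ((C : ℂ) * Complex.exp ((d : ℂ) - a * μ ^ 2)) *
          ∑' j : ℤ, Complex.exp (-(π:ℂ) * (A:ℂ) * (j:ℂ) ^ 2 + 2 * (π:ℂ) * (b:ℂ) * (j:ℂ)) :=
        tsum_mul_left
    _ = ((C : ℂ) * Complex.exp ((d : ℂ) - a * μ ^ 2)) *
          (1 / (A:ℂ) ^ (1/2 : ℂ) *
           ∑' t : ℤ, Complex.exp (-(π:ℂ) / (A:ℂ) * ((t:ℂ) + Complex.I * (b:ℂ)) ^ 2)) := by
        rw [Complex.tsum_exp_neg_quadratic (by simpa using hA) (b:ℂ)]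
    _ = ((C : ℂ) * Complex.exp ((d : ℂ) - a * μ ^ 2)) *
          (1 / (A:ℂ) ^ (1/2 : ℂ) *
           (Complex.exp ((a:ℂ) * (μ:ℂ) ^ 2) *
            ∑' t : ℤ, Complex.exp (-(π:ℂ)^2 * (t:ℂ)^2 / ((a:ℝ):ℂ)) *
              Complex.exp (-2 * (π:ℂ) * Complex.I * (t:ℂ) * (μ:ℂ)))) := by
        rw [tsum_congr hterm3, tsum_mul_left]
    _ = (2 / (π : ℂ)) *
          (1 / ((Real.sqrt (((m : ℝ) - 1) * (2 * (N : ℝ) + m - 1)) : ℝ) : ℂ)) *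
          Complex.exp (-(1 : ℂ) / ((2 * (N : ℝ) + m - 1 : ℝ) : ℂ)) *
          ∑' t : ℤ, Complex.exp (-(π : ℂ) ^ 2 * (t : ℂ) ^ 2 / ((α + β : ℝ) : ℂ)) *
            Complex.exp (-2 * (π : ℂ) * Complex.I * (t : ℂ) * (μ : ℂ)) := by
        rw [← ha_def]
        have hsq : ((A:ℝ) : ℂ) ^ (1/2 : ℂ) = ((Real.sqrt A : ℝ) : ℂ) := by
          rw [Real.sqrt_eq_rpow, Complex.ofReal_cpow hA.le]
          norm_num
        rw [hsq]
        rw [show ((C : ℂ) * Complex.exp ((d : ℂ) - a * μ ^ 2)) *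
            (1 / ((Real.sqrt A : ℝ) : ℂ) *
             (Complex.exp ((a:ℂ) * (μ:ℂ) ^ 2) * ∑' t : ℤ,
               Complex.exp (-(π:ℂ)^2 * (t:ℂ)^2 / ((a:ℝ):ℂ)) *
               Complex.exp (-2 * (π:ℂ) * Complex.I * (t:ℂ) * (μ:ℂ))))
          = ((C : ℂ) / ((Real.sqrt A : ℝ) : ℂ)) *
            (Complex.exp ((d : ℂ) - a * μ ^ 2) * Complex.exp ((a:ℂ) * (μ:ℂ) ^ 2)) *
            ∑' t : ℤ, Complex.exp (-(π:ℂ)^2 * (t:ℂ)^2 / ((a:ℝ):ℂ)) *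
               Complex.exp (-2 * (π:ℂ) * Complex.I * (t:ℂ) * (μ:ℂ)) from by ring]
        rw [← Complex.exp_add]
        congr 2
        · -- constant identity
          have key : C / Real.sqrt A = 2 / π * (1 / Real.sqrt (((m:ℝ) - 1) * (2 * (N:ℝ) + m - 1))) := by
            have hX : (0:ℝ) ≤ C / Real.sqrt A := by
              rw [hC_def]; positivity
            have hY : (0:ℝ) ≤ 2 / π * (1 / Real.sqrt (((m:ℝ) - 1) * (2 * (N:ℝ) + m - 1))) := by
              positivity
            have hsqrtA : Real.sqrt A ^ 2 = A := Real.sq_sqrt hA.le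
            have hsqrtP : Real.sqrt (((m:ℝ) - 1) * (2 * (N:ℝ) + m - 1)) ^ 2
                = ((m:ℝ) - 1) * (2 * (N:ℝ) + m - 1) := Real.sq_sqrt (by positivity)
            have hsqrt2 : Real.sqrt (2 / (π * (N:ℝ))) ^ 2 = 2 / (π * (N:ℝ)) :=
              Real.sq_sqrt (by positivity)
            have hR : 0 < Real.sqrt A := Real.sqrt_pos.2 hA
            have hP : 0 < Real.sqrt (((m:ℝ) - 1) * (2 * (N:ℝ) + m - 1)) :=
              Real.sqrt_pos.2 (by positivity)
            have hAval' : A * (π * ((m:ℝ) - 1) * N) = 2 * (2 * (N:ℝ) + m - 1) := by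
              rw [hA_def, haval]
              field_simp
            have a1 : Real.sqrt 2 ^ 2 = 2 := Real.sq_sqrt (by norm_num)
            have a2 : Real.sqrt ((m:ℝ) - 1) ^ 2 = (m:ℝ) - 1 := Real.sq_sqrt hm1.le
            have a3 : Real.sqrt (2 * (N:ℝ) + m - 1) ^ 2 = 2 * (N:ℝ) + m - 1 :=
              Real.sq_sqrt (by linarith)
            have aA : Real.sqrt A ^ 2 = A := Real.sq_sqrt hA.le
            have aπ : Real.sqrt π ^ 2 = π := Real.sq_sqrt hπ.le
            have aN : Real.sqrt (N:ℝ) ^ 2 = (N:ℝ) := Real.sq_sqrt hNR.le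
            have hX2 : (2 * Real.sqrt 2 * (π * (Real.sqrt ((m:ℝ) - 1) *
                  Real.sqrt (2 * (N:ℝ) + m - 1)))) ^ 2
                = 8 * π ^ 2 * (((m:ℝ) - 1) * (2 * (N:ℝ) + m - 1)) := by
              linear_combination (4 * π^2 * Real.sqrt ((m:ℝ)-1) ^ 2 *
                  Real.sqrt (2 * (N:ℝ) + m - 1) ^ 2) * a1
                + (8 * π^2 * Real.sqrt (2 * (N:ℝ) + m - 1) ^ 2) * a2
                + (8 * π^2 * ((m:ℝ)-1)) * a3
            have hY2 : (2 * Real.sqrt A * (π * ((m:ℝ) - 1) * (Real.sqrt π *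
                  Real.sqrt (N:ℝ)))) ^ 2
                = 8 * π ^ 2 * (((m:ℝ) - 1) * (2 * (N:ℝ) + m - 1)) := by
              linear_combination (4 * π^2 * ((m:ℝ)-1)^2 * Real.sqrt π ^ 2 * Real.sqrt (N:ℝ) ^ 2) * aA
                + (4 * A * π^2 * ((m:ℝ)-1)^2 * Real.sqrt (N:ℝ) ^ 2) * aπ
                + (4 * A * π^3 * ((m:ℝ)-1)^2) * aN
                + (4 * π^2 * ((m:ℝ)-1)) * hAval'
            rw [hC_def, show 2 / π * (1 / Real.sqrt (((m:ℝ) - 1) * (2 * (N:ℝ) + m - 1)))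
                = 2 / (π * Real.sqrt (((m:ℝ) - 1) * (2 * (N:ℝ) + m - 1))) from by ring,
              div_eq_div_iff hR.ne' (by positivity)]
            field_simp
            rw [← Real.sqrt_mul (show (0:ℝ) ≤ 2 / (π * (N:ℝ)) by positivity),
              ← Real.sqrt_sq (show (0:ℝ) ≤ ((m:ℝ) - 1) * Real.sqrt A by positivity),
              mul_pow, hsqrtA]
            congr 1
            rw [div_mul_eq_mul_div, div_eq_iff (by positivity)]
            linear_combination (-((m:ℝ) - 1)) * hAval'
          have keyC : (C : ℂ) / ((Real.sqrt A : ℝ) : ℂ)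
              = 2 / (π : ℂ) * (1 / ((Real.sqrt (((m:ℝ) - 1) * (2 * (N:ℝ) + m - 1)) : ℝ) : ℂ)) := by
            exact_mod_cast congrArg Complex.ofReal key
          rw [keyC]
        · -- exponent identity
          rw [hd_def]
          push_cast
          ring
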